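/- Sum of online ridge leverage scores bound: with the setup above, ∑_{i=1}^n lᵢ ≤ 2 d log(1 + ‖A‖₂²/λ), where ‖A‖₂ is the spectral (operator) norm of A. -/

import Mathlib

open Matrix

/-- The matrix of the first `k` rows of `A`. -/
def firstRows {n d : ℕ} (A : Matrix (Fin n) (Fin d) ℝ) (k : ℕ) (h : k ≤ n) :
    Matrix (Fin k) (Fin d) ℝ := fun i j => A (Fin.castLE h i) j

/-- The online `λ`-ridge leverage score of the `i`th row of `A`:
`lᵢ = min(aᵢᵀ(Aᵢ₋₁ᵀAᵢ₋₁ + λI)⁻¹aᵢ, 1)`. -/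
noncomputable def onlineScore {n d : ℕ} (A : Matrix (Fin n) (Fin d) ℝ)
    (lam : ℝ) (i : Fin n) : ℝ :=
  min (A i ⬝ᵥ ((firstRows A i i.2.le)ᵀ * firstRows A i i.2.le +
      lam • (1 : Matrix (Fin d) (Fin d) ℝ))⁻¹.mulVec (A i)) 1

lemma min_le_two_log {x : ℝ} (hx : 0 ≤ x) : min x 1 ≤ 2 * Real.log (1 + x) := by
  rcases le_total x 1 with h | h
  · rw [min_eq_left h]
    have h1 : (0:ℝ) < 1 + x := by linarith
    have h2 : Real.log (1 + x)⁻¹ ≤ (1 + x)⁻¹ - 1 :=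
      Real.log_le_sub_one_of_pos (by positivity)
    rw [Real.log_inv] at h2
    have h3 : x / 2 ≤ x / (1 + x) := by
      apply div_le_div_of_nonneg_left hx h1 (by linarith)
    have h4 : 1 - (1 + x)⁻¹ = x / (1 + x) := by field_simp; ring
    linarith
  · rw [min_eq_right h]
    have h2 : Real.log 2 ≤ Real.log (1 + x) :=
      Real.log_le_log (by norm_num) (by linarith)
    have := Real.log_two_gt_d9
    linarith

lemma det_lemma {d : ℕ} {M : Matrix (Fin d) (Fin d) ℝ} (hM : M.PosDef) (u : Fin d → ℝ) :
    (M + vecMulVec u u).det = M.det * (1 + u ⬝ᵥ M⁻¹ *ᵥ u) := by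
  rw [vecMulVec_eq Unit, det_add_replicateCol_mul_replicateRow hM.det_pos.ne'.isUnit]
  congr 1
  rw [det_unique]
  simp only [Matrix.add_apply, one_apply_eq, mul_apply, replicateRow_apply, replicateCol_apply, dotProduct, mulVec,
    dotProduct, Finset.univ_unique]
  congr 1
  simp_rw [Finset.sum_mul, Finset.mul_sum]
  rw [Finset.sum_comm]
  apply Finset.sum_congr rfl (fun i _ => Finset.sum_congr rfl (fun j _ => by ring))

lemma det_add_smul_one {d : ℕ} {B : Matrix (Fin d) (Fin d) ℝ} (hB : B.IsHermitian) (lam : ℝ) :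
    (B + lam • 1).det = ∏ i, (hB.eigenvalues i + lam) := by
  set U : Matrix (Fin d) (Fin d) ℝ := (hB.eigenvectorUnitary : Matrix (Fin d) (Fin d) ℝ)
  have hU : U * star U = 1 := mem_unitaryGroup_iff.mp hB.eigenvectorUnitary.2
  have key : B + lam • 1
      = U * (diagonal (RCLike.ofReal ∘ hB.eigenvalues) + lam • 1) * star U := by
    rw [mul_add, add_mul]
    congr 1
    · exact hB.spectral_theorem
    · rw [Matrix.mul_smul, Matrix.smul_mul, mul_one, hU]
  rw [key, det_mul, det_mul, mul_comm (det U), mul_assoc, ← det_mul, hU, det_one, mul_one]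
  rw [smul_one_eq_diagonal, diagonal_add, det_diagonal]
  simp

/-- The regularized Gram matrix of the first `k` rows. -/
noncomputable def Gm {n d : ℕ} (A : Matrix (Fin n) (Fin d) ℝ) (lam : ℝ) (k : ℕ) (h : k ≤ n) :
    Matrix (Fin d) (Fin d) ℝ :=
  (firstRows A k h)ᵀ * firstRows A k h + lam • 1

noncomputable def xval {n d : ℕ} (A : Matrix (Fin n) (Fin d) ℝ) (lam : ℝ) (i : Fin n) : ℝ :=
  A i ⬝ᵥ (Gm A lam i i.2.le)⁻¹ *ᵥ A i

lemma onlineScore_eq {n d : ℕ} (A : Matrix (Fin n) (Fin d) ℝ) (lam : ℝ) (i : Fin n) :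
    onlineScore A lam i = min (xval A lam i) 1 := rfl

lemma Gm_succ {n d : ℕ} (A : Matrix (Fin n) (Fin d) ℝ) (lam : ℝ) (k : ℕ) (h : k + 1 ≤ n) :
    Gm A lam (k+1) h
      = Gm A lam k (Nat.le_of_succ_le h) + vecMulVec (A ⟨k, h⟩) (A ⟨k, h⟩) := by
  ext p q
  simp only [Gm, Matrix.add_apply, mul_apply, transpose_apply, firstRows, vecMulVec_apply]
  rw [Fin.sum_univ_castSucc]
  have e2 : Fin.castLE h (Fin.last k) = (⟨k, h⟩ : Fin n) := rfl
  have e1 : ∀ i : Fin k, Fin.castLE h i.castSucc = Fin.castLE (Nat.le_of_succ_le h) i :=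
    fun i => rfl
  simp_rw [e1, e2]
  ring

lemma vecMulVec_posSemidef {d : ℕ} (u : Fin d → ℝ) : (vecMulVec u u).PosSemidef := by
  rw [vecMulVec_eq Unit]
  have := posSemidef_conjTranspose_mul_self (replicateRow Unit u)
  rwa [conjTranspose_replicateRow, show star u = u from funext fun i => star_trivial _] at this

lemma key_claim {n d : ℕ} (A : Matrix (Fin n) (Fin d) ℝ) (lam : ℝ) (hlam : 0 < lam) :
    ∀ k (h : k ≤ n), (Gm A lam k h).PosDef ∧
      (Gm A lam k h).det = lam ^ d * ∏ i : Fin n, (if i.val < k then 1 + xval A lam i else 1) := by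
  have hsmul : (lam • (1 : Matrix (Fin d) (Fin d) ℝ)).PosDef := by
    rw [smul_one_eq_diagonal]
    exact posDef_diagonal_iff.mpr (fun _ => hlam)
  intro k
  induction k with
  | zero =>
    intro h
    have hG0 : Gm A lam 0 h = lam • 1 := by
      ext p q
      simp [Gm, mul_apply]
    rw [hG0]
    refine ⟨hsmul, ?_⟩
    rw [smul_one_eq_diagonal, det_diagonal]
    simp
  | succ k ih =>
    intro h
    have hk := Nat.le_of_succ_le h
    obtain ⟨hpd, hdet⟩ := ih hk
    have hGs := Gm_succ A lam k h
    have hxk : xval A lam ⟨k, h⟩ = A ⟨k, h⟩ ⬝ᵥ (Gm A lam k hk)⁻¹ *ᵥ A ⟨k, h⟩ := rfl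
    constructor
    · rw [hGs]
      exact hpd.add_posSemidef (vecMulVec_posSemidef _)
    · rw [hGs, det_lemma hpd, hdet, ← hxk]
      have hprod : ∏ i : Fin n, (if i.val < k + 1 then 1 + xval A lam i else 1)
          = (∏ i : Fin n, (if i.val < k then 1 + xval A lam i else 1))
            * (1 + xval A lam ⟨k, h⟩) := by
        have : (1 + xval A lam ⟨k, h⟩)
            = ∏ i : Fin n, (if i = (⟨k, h⟩ : Fin n) then 1 + xval A lam i else 1) := by
          rw [Finset.prod_ite_eq' Finset.univ (⟨k, h⟩ : Fin n)]
          simp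
        rw [this, ← Finset.prod_mul_distrib]
        apply Finset.prod_congr rfl
        intro i _
        rcases eq_or_ne i (⟨k, h⟩ : Fin n) with rfl | hne
        · simp
        · have hv : i.val ≠ k := fun hv => hne (Fin.ext hv)
          by_cases h1 : i.val < k
          · have h2 : i.val < k + 1 := by omega
            simp [h1, h2, hne]
          · have h2 : ¬ i.val < k + 1 := by omega
            simp [h1, h2, hne]
      rw [hprod]
      ring

/-- Sum of online ridge leverage scores: `∑ᵢ lᵢ ≤ 2 d log(1 + ‖A‖₂²/λ)`,
where `‖A‖₂²` is the largest eigenvalue of `AᵀA`. -/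
theorem sum_online_scores_le {n d : ℕ} (A : Matrix (Fin n) (Fin d) ℝ)
    (lam : ℝ) (hlam : 0 < lam)
    (hA : (Aᵀ * A).IsHermitian) (s : ℝ) (hs : s = ⨆ i, hA.eigenvalues i) :
    ∑ i : Fin n, onlineScore A lam i ≤ 2 * d * Real.log (1 + s / lam) := by
  have hx_nonneg : ∀ i : Fin n, 0 ≤ xval A lam i := by
    intro i
    have hpd := (key_claim A lam hlam i.val i.2.le).1
    simpa [xval] using hpd.inv.posSemidef.dotProduct_mulVec_nonneg (A i)
  have hpos : ∀ i : Fin n, (0:ℝ) < 1 + xval A lam i := fun i => by linarith [hx_nonneg i]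
  -- step 1 : sum of scores bounded by 2 log of product
  have hsum : ∑ i : Fin n, onlineScore A lam i
      ≤ 2 * Real.log (∏ i : Fin n, (1 + xval A lam i)) := by
    rw [Real.log_prod (fun i _ => (hpos i).ne'), Finset.mul_sum]
    apply Finset.sum_le_sum
    intro i _
    rw [onlineScore_eq]
    exact min_le_two_log (hx_nonneg i)
  -- step 2 : product equals det / lam^d
  have hGn : Gm A lam n le_rfl = Aᵀ * A + lam • 1 := rfl
  have hdetn : (Aᵀ * A + lam • (1 : Matrix (Fin d) (Fin d) ℝ)).det
      = lam ^ d * ∏ i : Fin n, (1 + xval A lam i) := by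
    have := (key_claim A lam hlam n le_rfl).2
    rw [hGn] at this
    rw [this]
    congr 1
    exact Finset.prod_congr rfl (fun i _ => by simp [i.isLt])
  -- step 3 : det bound via eigenvalues
  have hdet_le : (Aᵀ * A + lam • (1 : Matrix (Fin d) (Fin d) ℝ)).det ≤ (s + lam) ^ d := by
    rw [det_add_smul_one hA lam,
        show ((s + lam) ^ d : ℝ) = ∏ _i : Fin d, (s + lam) by simp]
    apply Finset.prod_le_prod
    · intro i _
      have h0 : 0 ≤ hA.eigenvalues i := (posSemidef_conjTranspose_mul_self A).eigenvalues_nonneg i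
      linarith
    · intro i _
      have hle : hA.eigenvalues i ≤ s :=
        hs ▸ le_ciSup (Set.Finite.bddAbove (Set.finite_range _)) i
      linarith
  have hlamd : (0:ℝ) < lam ^ d := pow_pos hlam d
  have hprod_le : ∏ i : Fin n, (1 + xval A lam i) ≤ (1 + s / lam) ^ d := by
    have h1 : (∏ i : Fin n, (1 + xval A lam i)) * lam ^ d ≤ (s + lam) ^ d := by
      calc (∏ i : Fin n, (1 + xval A lam i)) * lam ^ d
          = (Aᵀ * A + lam • (1 : Matrix (Fin d) (Fin d) ℝ)).det := by rw [hdetn]; ring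
        _ ≤ (s + lam) ^ d := hdet_le
    have h2 : (1 + s / lam) ^ d = (s + lam) ^ d / lam ^ d := by
      rw [← div_pow]
      congr 1
      field_simp
      ring
    rw [h2, le_div_iff₀ hlamd]
    exact h1
  have hlog : Real.log (∏ i : Fin n, (1 + xval A lam i)) ≤ d * Real.log (1 + s / lam) := by
    have := Real.log_le_log (Finset.prod_pos (fun i _ => hpos i)) hprod_le
    rwa [Real.log_pow] at this
  calc ∑ i : Fin n, onlineScore A lam i
      ≤ 2 * Real.log (∏ i : Fin n, (1 + xval A lam i)) := hsum
    _ ≤ 2 * (d * Real.log (1 + s / lam)) := by linarith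
    _ = 2 * d * Real.log (1 + s / lam) := by ring
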